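/- arXiv:1606.08349 — 2 statements merged into one kernel-verified Lean document; each statement's English description precedes it below -/
import Mathlib

section
/- Let A be a Banach algebra and φ ∈ Δ(A) a character such that the closed linear span of A·ker φ equals ker φ. If the second dual A** (with an Arens product) is approximately biflat, then A is left φ-amenable. -/
set_option synthInstance.maxHeartbeats 1000000
set_option maxHeartbeats 4000000
set_option maxSynthPendingDepth 3
set_option linter.unusedSectionVars false
set_option linter.unusedVariables false
open scoped Topology
open Filter ContinuousLinearMap

noncomputable section

namespace ApproxBiflat

variable (A : Type*) [NonUnitalNormedRing A] [NormedSpace ℂ A]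
  [IsScalarTower ℂ A A] [SMulCommClass ℂ A A]

/-- The dual space `A*` of a Banach algebra `A`. -/
abbrev Dual' := A →L[ℂ] ℂ

/-- Bounded bilinear forms on `A × A`; this is the canonical isometric model of the dual
`(A ⊗_p A)*` of the projective tensor product `A ⊗_p A`. -/
abbrev BilForm := A →L[ℂ] A →L[ℂ] ℂ

/-- The canonical model of the second dual `(A ⊗_p A)**` of the projective tensor product. -/
abbrev TensorBidual := (A →L[ℂ] A →L[ℂ] ℂ) →L[ℂ] ℂ

/-- The bidual of a Banach algebra, as a Banach space. -/
abbrev Bidual := (A →L[ℂ] ℂ) →L[ℂ] ℂ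

variable {A}

/-- The left action of `A` on `A* = (A →L ℂ)`: `(a · f) x = f (x * a)`. -/
def dualLeft (a : A) : Dual' A →L[ℂ] Dual' A :=
  (compL ℂ A A ℂ).flip ((ContinuousLinearMap.mul ℂ A).flip a)

/-- The right action of `A` on `A*`: `(f · a) x = f (a * x)`. -/
def dualRight (a : A) : Dual' A →L[ℂ] Dual' A :=
  (compL ℂ A A ℂ).flip (ContinuousLinearMap.mul ℂ A a)

@[simp] lemma dualLeft_apply (a : A) (f : Dual' A) (x : A) : dualLeft a f x = f (x * a) := rfl
@[simp] lemma dualRight_apply (a : A) (f : Dual' A) (x : A) : dualRight a f x = f (a * x) := rfl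

/-- The adjoint `π* : A* → (A ⊗_p A)*` of the multiplication map
`π : A ⊗_p A → A`, in the bilinear-form model: `(π* f) a b = f (a * b)`. -/
def piStar : Dual' A →L[ℂ] BilForm A :=
  ((compL ℂ A (A →L[ℂ] A) (A →L[ℂ] ℂ)).flip (ContinuousLinearMap.mul ℂ A)).comp
    (compL ℂ A A ℂ)

@[simp] lemma piStar_apply (f : Dual' A) (a b : A) : piStar f a b = f (a * b) := rfl

/-- The left action of `A` on `(A ⊗_p A)*`: `(a · T) b c = T b (c * a)`. -/
def bilLeft (a : A) : BilForm A →L[ℂ] BilForm A :=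
  compL ℂ A (A →L[ℂ] ℂ) (A →L[ℂ] ℂ) (dualLeft a)

/-- The right action of `A` on `(A ⊗_p A)*`: `(T · a) b c = T (a * b) c`. -/
def bilRight (a : A) : BilForm A →L[ℂ] BilForm A :=
  (compL ℂ A A (A →L[ℂ] ℂ)).flip (ContinuousLinearMap.mul ℂ A a)

@[simp] lemma bilLeft_apply (a : A) (T : BilForm A) (b c : A) :
    bilLeft a T b c = T b (c * a) := rfl
@[simp] lemma bilRight_apply (a : A) (T : BilForm A) (b c : A) :
    bilRight a T b c = T (a * b) c := rfl

/-- The left action of `A` on `(A ⊗_p A)**`: `a · m = m ∘ (T ↦ T · a)`. -/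
def tbLeft (a : A) (m : TensorBidual A) : TensorBidual A := m.comp (bilRight a)

/-- The right action of `A` on `(A ⊗_p A)**`: `m · a = m ∘ (T ↦ a · T)`. -/
def tbRight (m : TensorBidual A) (a : A) : TensorBidual A := m.comp (bilLeft a)

/-- The elementary tensor `a ⊗ b`, viewed canonically inside `(A ⊗_p A)**`. -/
def dyad (a b : A) : TensorBidual A :=
  (ContinuousLinearMap.apply ℂ ℂ b).comp (ContinuousLinearMap.apply ℂ (A →L[ℂ] ℂ) a)

@[simp] lemma dyad_apply (a b : A) (T : BilForm A) : dyad a b T = T a b := rfl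

variable (A) in
/-- The canonical isometric image of the projective tensor product `A ⊗_p A` inside its bidual
`(A ⊗_p A)**`: the closure of the linear span of the elementary tensors. -/
def tensorSpan : Submodule ℂ (TensorBidual A) :=
  (Submodule.span ℂ {m : TensorBidual A | ∃ a b : A, m = dyad a b}).topologicalClosure

/-- The double adjoint `π** : (A ⊗_p A)** → A**` of the multiplication map. -/
def piStarStar (m : TensorBidual A) : Bidual A := m.comp piStar

/-- `ρ : (A ⊗_p A)* → A*` is a morphism of Banach `A`-bimodules. -/
def IsBimodMorphism (ρ : BilForm A →L[ℂ] Dual' A) : Prop :=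
  ∀ (a : A) (T : BilForm A),
    ρ (bilLeft a T) = dualLeft a (ρ T) ∧ ρ (bilRight a T) = dualRight a (ρ T)

variable (A)

/-- A Banach algebra `A` is **biflat** if there is a bounded `A`-bimodule morphism
`ρ : (A ⊗_p A)* → A*` with `ρ ∘ π* = id`. -/
def Biflat : Prop :=
  ∃ ρ : BilForm A →L[ℂ] Dual' A, IsBimodMorphism ρ ∧ ∀ f : Dual' A, ρ (piStar f) = f

/-- A Banach algebra `A` is **approximately biflat** if there is a net `(ρ_α)` of bounded
`A`-bimodule morphisms `(A ⊗_p A)* → A*` with `ρ_α ∘ π* → id_{A*}` in the weak-star operator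
topology.  (Nets are encoded by filters in the standard way.) -/
def ApproximatelyBiflat : Prop :=
  ∃ l : Filter (BilForm A →L[ℂ] Dual' A), l.NeBot ∧
    (∀ᶠ ρ in l, IsBimodMorphism ρ) ∧
    ∀ (f : Dual' A) (a : A), Tendsto (fun ρ => ρ (piStar f) a) l (𝓝 (f a))

/-- A Banach algebra `A` is **pseudo-amenable** if there is a net `(m_α)` in `A ⊗_p A`
(realized isometrically inside `(A ⊗_p A)**` as `tensorSpan A`) such that
`a · m_α - m_α · a → 0` and `π(m_α) a → a` for every `a ∈ A`. -/
def PseudoAmenable : Prop :=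
  ∃ l : Filter (TensorBidual A), l.NeBot ∧
    (∀ᶠ m in l, m ∈ tensorSpan A) ∧
    (∀ a : A, Tendsto (fun m => tbLeft a m - tbRight m a) l (𝓝 0)) ∧
    ∀ a : A, Tendsto (fun m => (piStarStar m).comp (dualLeft a)) l
      (𝓝 (NormedSpace.inclusionInDoubleDual ℂ A a))

/-- `A` has a (two-sided, not necessarily bounded) approximate identity. -/
def HasApproximateIdentity : Prop :=
  ∃ l : Filter A, l.NeBot ∧
    ∀ a : A, Tendsto (fun e => a * e) l (𝓝 a) ∧ Tendsto (fun e => e * a) l (𝓝 a)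

end ApproxBiflat
namespace ApproxBiflat

section Arens

variable {A : Type*} [NonUnitalNormedRing A] [NormedSpace ℂ A]
  [IsScalarTower ℂ A A] [SMulCommClass ℂ A A]

/-- The auxiliary map of the first Arens product: for `G ∈ A**`,
`arensAux G : A* → A*` is `f ↦ G ⋄ f`, where `(G ⋄ f) (a) = G (f · a)` and `(f · a) b = f (a b)`. -/
def arensAux (G : Bidual A) : Dual' A →L[ℂ] Dual' A :=
  (compL ℂ A (A →L[ℂ] ℂ) ℂ G).comp piStar

@[simp] lemma arensAux_apply (G : Bidual A) (f : Dual' A) (a : A) :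
    arensAux G f a = G (piStar f a) := rfl

/-- The first Arens product on the bidual `A**`: `(F □ G) (f) = F (G ⋄ f)`. -/
instance : Mul (Bidual A) := ⟨fun F G => F.comp (arensAux G)⟩

lemma arens_mul_apply (F G : Bidual A) (f : Dual' A) : (F * G) f = F (arensAux G f) := rfl

private lemma arensAux_add (G H : Bidual A) : arensAux (G + H) = arensAux G + arensAux H := by
  ext f a; simp

private lemma arensAux_smul (c : ℂ) (G : Bidual A) : arensAux (c • G) = c • arensAux G := by
  ext f a; simp

private lemma piStar_mul' (f : Dual' A) (a b : A) :
    piStar f (a * b) = piStar (piStar f a) b := by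
  ext c; simp [mul_assoc]

noncomputable instance : NonUnitalRing (Bidual A) :=
  { (inferInstance : AddCommGroup (Bidual A)) with
    mul := (· * ·)
    left_distrib := fun F G H => by
      ext f; simp [arens_mul_apply, arensAux_add]
    right_distrib := fun F G H => by
      ext f; simp [arens_mul_apply]
    zero_mul := fun F => by ext f; simp [arens_mul_apply]
    mul_zero := fun F => by
      ext f
      have : arensAux (0 : Bidual A) = 0 := by ext g a; simp
      simp [arens_mul_apply, this]
    mul_assoc := fun F G H => by
      ext f
      have key : arensAux G (arensAux H f) = arensAux (G * H) f := by
        ext a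
        have : piStar (arensAux H f) a = arensAux H (piStar f a) := by
          ext b; simp [piStar_mul']
        simp [this, arens_mul_apply]
      simp [arens_mul_apply, key] }

private lemma norm_piStar_app_le (f : Dual' A) (a : A) : ‖piStar f a‖ ≤ ‖f‖ * ‖a‖ := by
  refine ContinuousLinearMap.opNorm_le_bound _ (by positivity) fun b => ?_
  calc ‖f (a * b)‖ ≤ ‖f‖ * ‖a * b‖ := f.le_opNorm _
    _ ≤ ‖f‖ * (‖a‖ * ‖b‖) := by
        have := norm_mul_le a b
        have h0 : (0:ℝ) ≤ ‖f‖ := norm_nonneg _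
        nlinarith
    _ = ‖f‖ * ‖a‖ * ‖b‖ := by ring

private lemma norm_piStar_le' (f : Dual' A) : ‖piStar (A := A) f‖ ≤ ‖f‖ := by
  refine ContinuousLinearMap.opNorm_le_bound _ (norm_nonneg f) fun a => norm_piStar_app_le f a

private lemma norm_arensAux_le (G : Bidual A) : ‖arensAux G‖ ≤ ‖G‖ := by
  refine ContinuousLinearMap.opNorm_le_bound _ (norm_nonneg G) fun f => ?_
  have h1 : ‖arensAux G f‖ ≤ ‖G‖ * ‖piStar (A := A) f‖ := by
    exact ContinuousLinearMap.opNorm_comp_le G (piStar (A := A) f)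
  calc ‖arensAux G f‖ ≤ ‖G‖ * ‖piStar (A := A) f‖ := h1
    _ ≤ ‖G‖ * ‖f‖ := by
        have := norm_piStar_le' f
        have h0 : (0:ℝ) ≤ ‖G‖ := norm_nonneg _
        nlinarith

noncomputable instance : NonUnitalNormedRing (Bidual A) :=
  { (inferInstance : NormedAddCommGroup (Bidual A)),
    (inferInstance : NonUnitalRing (Bidual A)) with
    norm_mul_le := fun F G => by
      calc ‖F * G‖ ≤ ‖F‖ * ‖arensAux G‖ := ContinuousLinearMap.opNorm_comp_le _ _
        _ ≤ ‖F‖ * ‖G‖ := by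
            have := norm_arensAux_le G
            have h0 : (0:ℝ) ≤ ‖F‖ := norm_nonneg _
            nlinarith }

instance : IsScalarTower ℂ (Bidual A) (Bidual A) :=
  ⟨fun c F G => by
    show (c • F) * G = c • (F * G)
    ext f; simp [arens_mul_apply]⟩

instance : SMulCommClass ℂ (Bidual A) (Bidual A) :=
  ⟨fun c F G => by
    show c • (F * G) = F * (c • G)
    ext f; simp [arens_mul_apply, arensAux_smul]⟩

end Arens

end ApproxBiflat
namespace ApproxBiflat

section Characters

variable {A : Type*} [NonUnitalNormedRing A] [NormedSpace ℂ A]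
  [IsScalarTower ℂ A A] [SMulCommClass ℂ A A]

/-- A character on a Banach algebra: a non-zero multiplicative linear functional.
(Multiplicative linear functionals on Banach algebras are automatically continuous.) -/
def IsCharacter (φ : A →L[ℂ] ℂ) : Prop :=
  φ ≠ 0 ∧ ∀ a b : A, φ (a * b) = φ a * φ b

/-- `A` is approximately `φ`-inner amenable: there is a net `(a_α)` in `A` with
`a • a_α - a_α • a → 0` and `φ(a_α) → 1` for all `a ∈ A`. -/
def ApproximatelyPhiInnerAmenable (φ : A →L[ℂ] ℂ) : Prop :=
  ∃ l : Filter A, l.NeBot ∧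
    (∀ a : A, Filter.Tendsto (fun u => a * u - u * a) l (𝓝 0)) ∧
    Filter.Tendsto (fun u => φ u) l (𝓝 1)

/-- `A` is approximately left `φ`-amenable: there is a net `(m_α)` in `A` with
`a m_α - φ(a) m_α → 0` and `φ(m_α) → 1` for all `a ∈ A`. -/
def ApproximatelyLeftPhiAmenable (φ : A →L[ℂ] ℂ) : Prop :=
  ∃ l : Filter A, l.NeBot ∧
    (∀ a : A, Filter.Tendsto (fun u => a * u - φ a • u) l (𝓝 0)) ∧
    Filter.Tendsto (fun u => φ u) l (𝓝 1)

/-- `A` is left `φ`-amenable: there is `m ∈ A**` with `a · m = φ(a) m` for all `a ∈ A` and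
`φ̃(m) = 1`, where `φ̃` is the canonical extension of `φ` to `A**` and `a · m` is the canonical
left `A`-module action on `A** = (A*)*`, i.e. `(a · m)(f) = m (f · a)`. -/
def LeftPhiAmenable (φ : A →L[ℂ] ℂ) : Prop :=
  ∃ m : Bidual A, (∀ a : A, m.comp (dualRight a) = φ a • m) ∧ m φ = 1

end Characters

end ApproxBiflat
namespace ApproxBiflat

section Statement4Proof

variable {A : Type*} [NonUnitalNormedRing A] [NormedSpace ℂ A]
  [IsScalarTower ℂ A A] [SMulCommClass ℂ A A]

/-- The canonical embedding `A → A**`. -/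
def incl : A →L[ℂ] Bidual A := ContinuousLinearMap.apply ℂ ℂ

@[simp] lemma incl_apply (a : A) (f : Dual' A) : incl a f = f a := rfl

lemma incl_mul (a b : A) : incl (a * b) = (incl a) * (incl b) := by
  ext f; rfl

/-- The canonical extension of `φ ∈ A*` to a functional on `A**`. -/
def charExt (φ : Dual' A) : Dual' (Bidual A) := ContinuousLinearMap.apply ℂ ℂ φ

@[simp] lemma charExt_apply (φ : Dual' A) (F : Bidual A) : charExt φ F = F φ := rfl

lemma piStar_char (φ : Dual' A) (hmul : ∀ a b : A, φ (a * b) = φ a * φ b) (a : A) :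
    piStar φ a = φ a • φ := by
  ext b; simp [hmul]

lemma arensAux_char (φ : Dual' A) (hmul : ∀ a b : A, φ (a * b) = φ a * φ b) (G : Bidual A) :
    arensAux G φ = G φ • φ := by
  ext a
  simp [piStar_char φ hmul, smul_eq_mul, mul_comm]

lemma arens_mul_char (φ : Dual' A) (hmul : ∀ a b : A, φ (a * b) = φ a * φ b)
    (F G : Bidual A) : (F * G) φ = G φ * F φ := by
  rw [arens_mul_apply, arensAux_char φ hmul]
  simp [smul_eq_mul, mul_comm]

/-- The bounded linear map `A* → (A** ⊗ A**)*`, `f ↦ ((F, G) ↦ F(f) G(φ))`. -/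
def sForm (φ : Dual' A) : Dual' A →L[ℂ] BilForm (Bidual A) :=
  ((ContinuousLinearMap.smulRightL ℂ (Bidual A) (Dual' (Bidual A))).flip (charExt φ)).comp
    (ContinuousLinearMap.apply ℂ ℂ)

@[simp] lemma sForm_apply (φ : Dual' A) (f : Dual' A) (F G : Bidual A) :
    sForm φ f F G = F f * G φ := rfl

lemma bilRight_incl_sForm (φ : Dual' A) (a : A) (f : Dual' A) :
    bilRight (incl a) (sForm φ f) = sForm φ (dualRight a f) := by
  ext F G
  have hps : piStar f a = dualRight a f := by ext b; simp
  simp only [bilRight_apply, sForm_apply]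
  have hmulF : (incl a * F) f = F (dualRight a f) := by
    rw [arens_mul_apply, incl_apply, arensAux_apply, hps]
  rw [hmulF]

lemma bilLeft_sForm (φ : Dual' A) (hmul : ∀ a b : A, φ (a * b) = φ a * φ b)
    (H : Bidual A) (f : Dual' A) :
    bilLeft H (sForm φ f) = H φ • sForm φ f := by
  ext F G
  simp only [bilLeft_apply, sForm_apply, ContinuousLinearMap.smul_apply, smul_eq_mul]
  rw [arens_mul_char φ hmul]
  ring

lemma sForm_char (φ : Dual' A) (hmul : ∀ a b : A, φ (a * b) = φ a * φ b) :
    sForm φ φ = piStar (charExt φ) := by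
  ext F G
  simp only [sForm_apply, piStar_apply, charExt_apply]
  rw [arens_mul_char φ hmul]
  ring

end Statement4Proof

/-- Let `A` be a Banach algebra and `φ ∈ Δ(A)` a character such that the
closed linear span of `A · ker φ` equals `ker φ`.  If the second dual `A**` (with the first
Arens product) is approximately biflat, then `A` is left `φ`-amenable. -/
theorem statement4 (A : Type*) [NonUnitalNormedRing A] [NormedSpace ℂ A]
    [IsScalarTower ℂ A A] [SMulCommClass ℂ A A] [CompleteSpace A]
    (φ : A →L[ℂ] ℂ) (hφ : IsCharacter φ)
    (hker : (Submodule.span ℂ {x : A | ∃ a k : A, φ k = 0 ∧ x = a * k}).topologicalClosure =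
      LinearMap.ker (φ : A →ₗ[ℂ] ℂ))
    (hbiflat : ApproximatelyBiflat (Bidual A)) :
    LeftPhiAmenable φ := by
  obtain ⟨hne, hmul⟩ := hφ
  obtain ⟨x, hx⟩ : ∃ x : A, φ x ≠ 0 := by
    by_contra h
    push_neg at h
    exact hne (ContinuousLinearMap.ext fun a => by simp [h a])
  set u : A := (φ x)⁻¹ • x with hu
  have hφu : φ u = 1 := by
    simp [hu, map_smul, smul_eq_mul, inv_mul_cancel₀ hx]
  obtain ⟨l, hl, hbm, htend⟩ := hbiflat
  haveI := hl
  have h1 : Tendsto (fun ρ : BilForm (Bidual A) →L[ℂ] Dual' (Bidual A) =>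
      ρ (piStar (charExt φ)) (incl u)) l (𝓝 (charExt φ (incl u))) :=
    htend (charExt φ) (incl u)
  have hψu : charExt φ (incl u) = 1 := by simp [hφu]
  rw [hψu] at h1
  have h2 : ∀ᶠ ρ in l, ρ (piStar (charExt φ)) (incl u) ≠ 0 :=
    h1.eventually_ne one_ne_zero
  obtain ⟨ρ, hρbm, hρne⟩ := (hbm.and h2).exists
  set m₀ : Bidual A :=
    (ContinuousLinearMap.apply ℂ ℂ (incl u)).comp (ρ.comp (sForm φ)) with hm₀
  have hm₀_apply : ∀ f : Dual' A, m₀ f = ρ (sForm φ f) (incl u) := fun f => rfl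
  have hkill : ∀ f : Dual' A, ∀ y : A, φ y = 0 → ρ (sForm φ f) (incl y) = 0 := by
    intro f y hy
    set q : A →L[ℂ] ℂ := (ρ (sForm φ f)).comp incl with hq
    have hq_gen : (Submodule.span ℂ {z : A | ∃ a k : A, φ k = 0 ∧ z = a * k}) ≤
        LinearMap.ker (q : A →ₗ[ℂ] ℂ) := by
      rw [Submodule.span_le]
      rintro z ⟨a, k, hk, rfl⟩
      have h3 := (hρbm (incl k) (sForm φ f)).1
      rw [bilLeft_sForm φ hmul, map_smul] at h3
      have h4 := congrArg (fun T : Dual' (Bidual A) => T (incl a)) h3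
      simp only [ContinuousLinearMap.smul_apply, dualLeft_apply, smul_eq_mul] at h4
      simp only [SetLike.mem_coe, LinearMap.mem_ker, ContinuousLinearMap.coe_coe, hq,
        ContinuousLinearMap.comp_apply]
      rw [incl_mul, ← h4, incl_apply, hk, zero_mul]
    have hcl := Submodule.topologicalClosure_minimal _ hq_gen (ContinuousLinearMap.isClosed_ker q)
    rw [hker] at hcl
    have hy' : y ∈ LinearMap.ker (q : A →ₗ[ℂ] ℂ) := hcl (LinearMap.mem_ker.mpr hy)
    simpa [hq] using hy'
  have hprop : ∀ f : Dual' A, ∀ a : A, ρ (sForm φ f) (incl a) = φ a * m₀ f := by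
    intro f a
    have hker' : φ (a - φ a • u) = 0 := by
      simp [map_sub, map_smul, hφu, smul_eq_mul]
    have h5 := hkill f (a - φ a • u) hker'
    rw [map_sub, map_smul, map_sub, map_smul] at h5
    rw [sub_eq_zero] at h5
    rw [h5, hm₀_apply]
    simp [smul_eq_mul]
  have hmod : ∀ (a : A) (f : Dual' A), m₀ (dualRight a f) = φ a * m₀ f := by
    intro a f
    have h6 : m₀ (dualRight a f) = ρ (bilRight (incl a) (sForm φ f)) (incl u) := by
      rw [hm₀_apply, bilRight_incl_sForm]
    rw [h6, (hρbm (incl a) (sForm φ f)).2, dualRight_apply, ← incl_mul,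
      hprop f (a * u), hmul, hφu, mul_one]
  have hc : m₀ φ = ρ (piStar (charExt φ)) (incl u) := by
    rw [hm₀_apply, sForm_char φ hmul]
  have hc0 : m₀ φ ≠ 0 := by rw [hc]; exact hρne
  refine ⟨(m₀ φ)⁻¹ • m₀, fun a => ?_, ?_⟩
  · ext f
    simp only [ContinuousLinearMap.comp_apply, ContinuousLinearMap.smul_apply, smul_eq_mul]
    rw [hmod a f]
    ring
  · simp only [ContinuousLinearMap.smul_apply, smul_eq_mul]
    exact inv_mul_cancel₀ hc0


end ApproxBiflat
end
end

section
/- Let T = Tri(A,X,B) be a Triangular Banach algebra with closure(A²) = A and closure(A·X) = X, and let φ ∈ Δ(B) satisfy closure(B·ker φ) = ker φ. If either (i) B is not left φ-amenable, or (ii) X admits a right φ-character, then T** (with an Arens product) is not approximately biflat. -/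
set_option synthInstance.maxHeartbeats 1000000
set_option maxHeartbeats 4000000
set_option maxSynthPendingDepth 3
set_option linter.unusedSectionVars false
set_option linter.unusedVariables false
open scoped Topology
open Filter ContinuousLinearMap

noncomputable section

namespace ApproxBiflat

/-- A Banach `A, B`-module `X`: a Banach space with a contractive left `A`-action and a
contractive right `B`-action that commute. -/
class BanachBimodule (A B X : Type*)
    [NonUnitalNormedRing A] [NormedSpace ℂ A]
    [NonUnitalNormedRing B] [NormedSpace ℂ B]
    [NormedAddCommGroup X] [NormedSpace ℂ X] where
  lsmul : A →L[ℂ] X →L[ℂ] X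
  rsmul : B →L[ℂ] X →L[ℂ] X
  lsmul_mul : ∀ (a a' : A) (x : X), lsmul (a * a') x = lsmul a (lsmul a' x)
  rsmul_mul : ∀ (b b' : B) (x : X), rsmul (b * b') x = rsmul b' (rsmul b x)
  lsmul_rsmul : ∀ (a : A) (b : B) (x : X), lsmul a (rsmul b x) = rsmul b (lsmul a x)
  norm_lsmul_le : ∀ (a : A) (x : X), ‖lsmul a x‖ ≤ ‖a‖ * ‖x‖
  norm_rsmul_le : ∀ (b : B) (x : X), ‖rsmul b x‖ ≤ ‖b‖ * ‖x‖

section BimodAbbrev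

variable (A B X : Type*)
  [NonUnitalNormedRing A] [NormedSpace ℂ A]
  [NonUnitalNormedRing B] [NormedSpace ℂ B]
  [NormedAddCommGroup X] [NormedSpace ℂ X] [BanachBimodule A B X]

/-- The left action of `A` on the Banach `A,B`-module `X`. -/
noncomputable def lAct : A →L[ℂ] X →L[ℂ] X := BanachBimodule.lsmul B

/-- The right action of `B` on the Banach `A,B`-module `X`. -/
noncomputable def rAct : B →L[ℂ] X →L[ℂ] X := BanachBimodule.rsmul A

end BimodAbbrev

/-- The triangular Banach algebra `Tri(A, X, B)` of matrices `[[a, x], [0, b]]`,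
with norm `‖a‖ + ‖x‖ + ‖b‖`. -/
@[ext]
structure Tri (A X B : Type*) where
  a : A
  x : X
  b : B

namespace Tri

variable {A B X : Type*}
  [NonUnitalNormedRing A] [NormedSpace ℂ A] [IsScalarTower ℂ A A] [SMulCommClass ℂ A A]
  [NonUnitalNormedRing B] [NormedSpace ℂ B] [IsScalarTower ℂ B B] [SMulCommClass ℂ B B]
  [NormedAddCommGroup X] [NormedSpace ℂ X]

instance : Add (Tri A X B) := ⟨fun s t => ⟨s.a + t.a, s.x + t.x, s.b + t.b⟩⟩
instance : Zero (Tri A X B) := ⟨⟨0, 0, 0⟩⟩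
instance : Neg (Tri A X B) := ⟨fun t => ⟨-t.a, -t.x, -t.b⟩⟩
instance : SMul ℂ (Tri A X B) := ⟨fun c t => ⟨c • t.a, c • t.x, c • t.b⟩⟩

@[simp] lemma add_a (s t : Tri A X B) : (s + t).a = s.a + t.a := rfl
@[simp] lemma add_x (s t : Tri A X B) : (s + t).x = s.x + t.x := rfl
@[simp] lemma add_b (s t : Tri A X B) : (s + t).b = s.b + t.b := rfl
@[simp] lemma zero_a : (0 : Tri A X B).a = 0 := rfl
@[simp] lemma zero_x : (0 : Tri A X B).x = 0 := rfl
@[simp] lemma zero_b : (0 : Tri A X B).b = 0 := rfl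
@[simp] lemma neg_a (t : Tri A X B) : (-t).a = -t.a := rfl
@[simp] lemma neg_x (t : Tri A X B) : (-t).x = -t.x := rfl
@[simp] lemma neg_b (t : Tri A X B) : (-t).b = -t.b := rfl
@[simp] lemma smul_a (c : ℂ) (t : Tri A X B) : (c • t).a = c • t.a := rfl
@[simp] lemma smul_x (c : ℂ) (t : Tri A X B) : (c • t).x = c • t.x := rfl
@[simp] lemma smul_b (c : ℂ) (t : Tri A X B) : (c • t).b = c • t.b := rfl

instance : AddCommGroup (Tri A X B) where
  add_assoc s t u := by ext <;> simp [add_assoc]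
  zero_add t := by ext <;> simp
  add_zero t := by ext <;> simp
  neg_add_cancel t := by ext <;> simp
  add_comm s t := by ext <;> simp [add_comm]
  nsmul := nsmulRec
  zsmul := zsmulRec

instance : Module ℂ (Tri A X B) where
  one_smul t := by ext <;> simp
  mul_smul c d t := by ext <;> simp [mul_smul]
  smul_zero c := by ext <;> simp
  smul_add c s t := by ext <;> simp
  add_smul c d t := by ext <;> simp [add_smul]
  zero_smul t := by ext <;> simp

noncomputable instance : NormedAddCommGroup (Tri A X B) :=
  AddGroupNorm.toNormedAddCommGroup
    { toFun := fun t => ‖t.a‖ + ‖t.x‖ + ‖t.b‖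
      map_zero' := by simp
      add_le' := fun s t => by
        have h1 := norm_add_le s.a t.a
        have h2 := norm_add_le s.x t.x
        have h3 := norm_add_le s.b t.b
        simp only [add_a, add_x, add_b]
        linarith
      neg' := fun t => by simp
      eq_zero_of_map_eq_zero' := fun t h => by
        have h' : ‖t.a‖ + ‖t.x‖ + ‖t.b‖ = 0 := h
        have h1 : ‖t.a‖ = 0 := by
          nlinarith [norm_nonneg t.a, norm_nonneg t.x, norm_nonneg t.b]
        have h2 : ‖t.x‖ = 0 := by
          nlinarith [norm_nonneg t.a, norm_nonneg t.x, norm_nonneg t.b]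
        have h3 : ‖t.b‖ = 0 := by
          nlinarith [norm_nonneg t.a, norm_nonneg t.x, norm_nonneg t.b]
        ext
        · exact norm_eq_zero.1 h1
        · exact norm_eq_zero.1 h2
        · exact norm_eq_zero.1 h3 }

lemma norm_def (t : Tri A X B) : ‖t‖ = ‖t.a‖ + ‖t.x‖ + ‖t.b‖ := rfl

noncomputable instance : NormedSpace ℂ (Tri A X B) where
  norm_smul_le c t := by
    rw [norm_def, norm_def]
    simp only [smul_a, smul_x, smul_b, norm_smul]
    exact le_of_eq (by ring)

section Mul

variable [BanachBimodule A B X]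

instance : Mul (Tri A X B) :=
  ⟨fun s t => ⟨s.a * t.a, lAct A B X s.a t.x + rAct A B X t.b s.x, s.b * t.b⟩⟩

@[simp] lemma mul_a (s t : Tri A X B) : (s * t).a = s.a * t.a := rfl
@[simp] lemma mul_x (s t : Tri A X B) :
    (s * t).x = lAct A B X s.a t.x + rAct A B X t.b s.x := rfl
@[simp] lemma mul_b (s t : Tri A X B) : (s * t).b = s.b * t.b := rfl

private lemma lAct_mul (a a' : A) (x : X) :
    lAct A B X (a * a') x = lAct A B X a (lAct A B X a' x) :=
  BanachBimodule.lsmul_mul (A := A) (B := B) (X := X) a a' x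
private lemma rAct_mul (b b' : B) (x : X) :
    rAct A B X (b * b') x = rAct A B X b' (rAct A B X b x) :=
  BanachBimodule.rsmul_mul (A := A) (B := B) (X := X) b b' x
private lemma lAct_rAct (a : A) (b : B) (x : X) :
    lAct A B X a (rAct A B X b x) = rAct A B X b (lAct A B X a x) :=
  BanachBimodule.lsmul_rsmul (A := A) (B := B) (X := X) a b x

instance : NonUnitalRing (Tri A X B) where
  left_distrib s t u := by
    ext <;> simp [mul_add, map_add] <;> try abel
  right_distrib s t u := by
    ext <;> simp [add_mul, map_add, ContinuousLinearMap.add_apply] <;> try abel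
  zero_mul t := by ext <;> simp
  mul_zero t := by ext <;> simp
  mul_assoc s t u := by
    ext
    · simp [mul_assoc]
    · simp only [mul_x, mul_a, mul_b, map_add, ContinuousLinearMap.add_apply,
        lAct_mul, rAct_mul, lAct_rAct]
      abel
    · simp [mul_assoc]

noncomputable instance : NonUnitalNormedRing (Tri A X B) :=
  { (inferInstance : NormedAddCommGroup (Tri A X B)),
    (inferInstance : NonUnitalRing (Tri A X B)) with
    norm_mul_le := fun s t => by
      rw [norm_def, norm_def, norm_def]
      simp only [mul_a, mul_x, mul_b]
      have h1 := norm_mul_le s.a t.a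
      have h2 := norm_mul_le s.b t.b
      have h3 := norm_add_le (lAct A B X s.a t.x) (rAct A B X t.b s.x)
      have h4 : ‖lAct A B X s.a t.x‖ ≤ ‖s.a‖ * ‖t.x‖ :=
        BanachBimodule.norm_lsmul_le (A := A) (B := B) (X := X) s.a t.x
      have h5 : ‖rAct A B X t.b s.x‖ ≤ ‖t.b‖ * ‖s.x‖ :=
        BanachBimodule.norm_rsmul_le (A := A) (B := B) (X := X) t.b s.x
      have n1 := norm_nonneg s.a; have n2 := norm_nonneg s.x; have n3 := norm_nonneg s.b
      have n4 := norm_nonneg t.a; have n5 := norm_nonneg t.x; have n6 := norm_nonneg t.b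
      nlinarith }

instance : IsScalarTower ℂ (Tri A X B) (Tri A X B) :=
  ⟨fun c s t => by
    show (c • s) * t = c • (s * t)
    ext
    · simp [smul_mul_assoc]
    · simp [map_smul, smul_add]
    · simp [smul_mul_assoc]⟩

instance : SMulCommClass ℂ (Tri A X B) (Tri A X B) :=
  ⟨fun c s t => by
    show c • (s * t) = s * (c • t)
    ext
    · simp [mul_smul_comm]
    · simp [map_smul, smul_add]
    · simp [mul_smul_comm]⟩

end Mul

/-- The projection `Tri(A,X,B) → B` as a continuous linear map. -/
noncomputable def projB : Tri A X B →L[ℂ] B :=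
  LinearMap.mkContinuous
    { toFun := fun t => t.b
      map_add' := fun _ _ => rfl
      map_smul' := fun _ _ => rfl } 1
    (fun t => by
      show ‖t.b‖ ≤ 1 * ‖t‖
      rw [one_mul, norm_def]
      have := norm_nonneg t.a; have := norm_nonneg t.x
      linarith)

@[simp] lemma projB_apply (t : Tri A X B) : projB t = t.b := rfl

end Tri

/-- The character `ψ_φ` on `Tri(A,X,B)` induced by a character `φ` on `B`:
`ψ_φ [[a,x],[0,b]] = φ b`. -/
noncomputable def triCharacter {A B X : Type*}
    [NonUnitalNormedRing A] [NormedSpace ℂ A] [IsScalarTower ℂ A A] [SMulCommClass ℂ A A]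
    [NonUnitalNormedRing B] [NormedSpace ℂ B] [IsScalarTower ℂ B B] [SMulCommClass ℂ B B]
    [NormedAddCommGroup X] [NormedSpace ℂ X]
    (φ : B →L[ℂ] ℂ) : Tri A X B →L[ℂ] ℂ :=
  φ.comp Tri.projB

end ApproxBiflat
namespace ApproxBiflat

section AuxStatement12

variable {A B X : Type*}
  [NonUnitalNormedRing A] [NormedSpace ℂ A] [IsScalarTower ℂ A A] [SMulCommClass ℂ A A]
  [NonUnitalNormedRing B] [NormedSpace ℂ B] [IsScalarTower ℂ B B] [SMulCommClass ℂ B B]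
  [NormedAddCommGroup X] [NormedSpace ℂ X] [BanachBimodule A B X]

/-- The embedding `a ↦ [[a,0],[0,0]]`. -/
noncomputable def iA : A →L[ℂ] Tri A X B :=
  LinearMap.mkContinuous
    { toFun := fun a => ⟨a, 0, 0⟩
      map_add' := fun a a' => by ext <;> simp
      map_smul' := fun c a => by ext <;> simp }
    1 (fun a => by
      show ‖(⟨a, 0, 0⟩ : Tri A X B)‖ ≤ 1 * ‖a‖
      rw [Tri.norm_def]; simp)

/-- The embedding `x ↦ [[0,x],[0,0]]`. -/
noncomputable def iX : X →L[ℂ] Tri A X B :=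
  LinearMap.mkContinuous
    { toFun := fun x => ⟨0, x, 0⟩
      map_add' := fun x x' => by ext <;> simp
      map_smul' := fun c x => by ext <;> simp }
    1 (fun x => by
      show ‖(⟨0, x, 0⟩ : Tri A X B)‖ ≤ 1 * ‖x‖
      rw [Tri.norm_def]; simp)

/-- The embedding `b ↦ [[0,0],[0,b]]`. -/
noncomputable def iB : B →L[ℂ] Tri A X B :=
  LinearMap.mkContinuous
    { toFun := fun b => ⟨0, 0, b⟩
      map_add' := fun b b' => by ext <;> simp
      map_smul' := fun c b => by ext <;> simp }
    1 (fun b => by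
      show ‖(⟨0, 0, b⟩ : Tri A X B)‖ ≤ 1 * ‖b‖
      rw [Tri.norm_def]; simp)

@[simp] lemma iA_a (a : A) : (iA (B := B) (X := X) a).a = a := rfl
@[simp] lemma iA_x (a : A) : (iA (B := B) (X := X) a).x = 0 := rfl
@[simp] lemma iA_b (a : A) : (iA (B := B) (X := X) a).b = 0 := rfl
@[simp] lemma iX_a (x : X) : (iX (A := A) (B := B) x).a = 0 := rfl
@[simp] lemma iX_x (x : X) : (iX (A := A) (B := B) x).x = x := rfl
@[simp] lemma iX_b (x : X) : (iX (A := A) (B := B) x).b = 0 := rfl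
@[simp] lemma iB_a (b : B) : (iB (A := A) (X := X) b).a = 0 := rfl
@[simp] lemma iB_x (b : B) : (iB (A := A) (X := X) b).x = 0 := rfl
@[simp] lemma iB_b (b : B) : (iB (A := A) (X := X) b).b = b := rfl

/-- The projection `Tri A X B → X`. -/
noncomputable def projX : Tri A X B →L[ℂ] X :=
  LinearMap.mkContinuous
    { toFun := fun t => t.x
      map_add' := fun _ _ => rfl
      map_smul' := fun _ _ => rfl } 1
    (fun t => by
      show ‖t.x‖ ≤ 1 * ‖t‖
      rw [one_mul, Tri.norm_def]
      have := norm_nonneg t.a; have := norm_nonneg t.b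
      linarith)

@[simp] lemma projX_apply (t : Tri A X B) : projX (A := A) (B := B) t = t.x := rfl

@[simp] lemma triCharacter_apply (φ : B →L[ℂ] ℂ) (t : Tri A X B) :
    triCharacter (A := A) (X := X) φ t = φ t.b := rfl

/-- The canonical embedding of `Tri A X B` into its bidual. -/
noncomputable def emb : Tri A X B →L[ℂ] Bidual (Tri A X B) :=
  ContinuousLinearMap.apply ℂ ℂ

@[simp] lemma emb_apply (t : Tri A X B) (f : Dual' (Tri A X B)) : emb t f = f t := rfl

lemma emb_mul (s t : Tri A X B) : (emb s) * (emb t) = emb (s * t) := by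
  ext f; rfl

lemma emb_mul_left_apply (w : Tri A X B) (F : Bidual (Tri A X B)) (f : Dual' (Tri A X B)) :
    (emb w * F) f = F (piStar f w) := rfl

/-- The canonical extension `Ψ` of the character `ψ = triCharacter φ` to the bidual. -/
noncomputable def Psi (φ : B →L[ℂ] ℂ) : Dual' (Bidual (Tri A X B)) :=
  ContinuousLinearMap.apply ℂ ℂ (triCharacter (A := A) (X := X) φ)

@[simp] lemma Psi_apply (φ : B →L[ℂ] ℂ) (F : Bidual (Tri A X B)) :
    Psi (A := A) (X := X) φ F = F (triCharacter (A := A) (X := X) φ) := rfl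

lemma piStar_triChar (φ : B →L[ℂ] ℂ) (hmul : ∀ b b', φ (b * b') = φ b * φ b')
    (t : Tri A X B) :
    piStar (triCharacter (A := A) (X := X) φ) t
      = φ t.b • triCharacter (A := A) (X := X) φ := by
  ext s
  simp [hmul]

lemma mul_psi (φ : B →L[ℂ] ℂ) (hmul : ∀ b b', φ (b * b') = φ b * φ b')
    (G R : Bidual (Tri A X B)) :
    (G * R) (triCharacter (A := A) (X := X) φ) =
      R (triCharacter (A := A) (X := X) φ) * G (triCharacter (A := A) (X := X) φ) := by
  have h : arensAux R (triCharacter (A := A) (X := X) φ)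
      = R (triCharacter (A := A) (X := X) φ) • triCharacter (A := A) (X := X) φ := by
    ext t
    simp [piStar_triChar φ hmul t, mul_comm]
  rw [arens_mul_apply, h, map_smul, smul_eq_mul]

/-- The basic bilinear form `Φ_f(F, G) = F(f) · G(ψ)` on the bidual. -/
noncomputable def PhiForm (φ : B →L[ℂ] ℂ) (f : Dual' (Tri A X B)) :
    BilForm (Bidual (Tri A X B)) :=
  (ContinuousLinearMap.apply ℂ ℂ f).smulRight (Psi (A := A) (X := X) φ)

@[simp] lemma PhiForm_apply (φ : B →L[ℂ] ℂ) (f : Dual' (Tri A X B))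
    (F G : Bidual (Tri A X B)) :
    PhiForm φ f F G = F f * G (triCharacter (A := A) (X := X) φ) := by
  simp [PhiForm, ContinuousLinearMap.smul_apply, smul_eq_mul]

lemma bilLeft_PhiForm (φ : B →L[ℂ] ℂ) (hmul : ∀ b b', φ (b * b') = φ b * φ b')
    (f : Dual' (Tri A X B)) (R : Bidual (Tri A X B)) :
    bilLeft R (PhiForm φ f) = R (triCharacter (A := A) (X := X) φ) • PhiForm φ f := by
  ext F G
  simp only [bilLeft_apply, PhiForm_apply, ContinuousLinearMap.smul_apply, smul_eq_mul,
    mul_psi φ hmul]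
  ring

lemma bilRight_PhiForm (φ : B →L[ℂ] ℂ) (f : Dual' (Tri A X B)) (w : Tri A X B) :
    bilRight (emb w) (PhiForm φ f) = PhiForm φ (piStar f w) := by
  ext F G
  simp only [bilRight_apply, PhiForm_apply, emb_mul_left_apply]

lemma eigen (φ : B →L[ℂ] ℂ) (hmul : ∀ b b', φ (b * b') = φ b * φ b')
    (f : Dual' (Tri A X B)) {ρ : BilForm (Bidual (Tri A X B)) →L[ℂ] Dual' (Bidual (Tri A X B))}
    (hρ : IsBimodMorphism ρ) (W R : Bidual (Tri A X B)) :
    ρ (PhiForm φ f) (W * R)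
      = R (triCharacter (A := A) (X := X) φ) * ρ (PhiForm φ f) W := by
  have h := (hρ R (PhiForm φ f)).1
  rw [bilLeft_PhiForm φ hmul f R, map_smul] at h
  have h2 := congrArg (fun g => g W) h
  simpa [dualLeft_apply, ContinuousLinearMap.smul_apply, smul_eq_mul] using h2.symm

lemma rightmove (φ : B →L[ℂ] ℂ) (f : Dual' (Tri A X B)) (w : Tri A X B)
    {ρ : BilForm (Bidual (Tri A X B)) →L[ℂ] Dual' (Bidual (Tri A X B))}
    (hρ : IsBimodMorphism ρ) (W : Bidual (Tri A X B)) :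
    ρ (PhiForm φ (piStar f w)) W = ρ (PhiForm φ f) (emb w * W) := by
  have h := (hρ (emb w) (PhiForm φ f)).2
  rw [bilRight_PhiForm φ f w] at h
  exact congrArg (fun g => g W) h

lemma vanishX (φ : B →L[ℂ] ℂ)
    (hAX : (Submodule.span ℂ
      {y : X | ∃ (a : A) (x : X), y = lAct A B X a x}).topologicalClosure = ⊤)
    {g : Dual' (Bidual (Tri A X B))}
    (hg : ∀ W R : Bidual (Tri A X B),
      g (W * R) = R (triCharacter (A := A) (X := X) φ) * g W)
    (x : X) : g (emb (iX x)) = 0 := by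
  set G : X →L[ℂ] ℂ := (g.comp emb).comp iX with hG
  have hspan : Submodule.span ℂ {y : X | ∃ (a : A) (x : X), y = lAct A B X a x}
      ≤ LinearMap.ker (G : X →ₗ[ℂ] ℂ) := by
    rw [Submodule.span_le]
    rintro y ⟨a, x', rfl⟩
    have e1 : iX (lAct A B X a x') = iA (B := B) a * iX x' := by
      ext <;> simp
    have : G (lAct A B X a x') = 0 := by
      show g (emb (iX (lAct A B X a x'))) = 0
      rw [e1, ← emb_mul, hg]
      simp
    simpa [LinearMap.mem_ker] using this
  have hclosed : IsClosed ((LinearMap.ker (G : X →ₗ[ℂ] ℂ) : Submodule ℂ X) : Set X) :=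
    ContinuousLinearMap.isClosed_ker G
  have hc := Submodule.topologicalClosure_minimal _ hspan hclosed
  rw [hAX] at hc
  have := hc (Submodule.mem_top (x := x))
  simpa [LinearMap.mem_ker, hG] using this

lemma vanishKer (φ : B →L[ℂ] ℂ)
    (hker : (Submodule.span ℂ
      {y : B | ∃ b k : B, φ k = 0 ∧ y = b * k}).topologicalClosure = LinearMap.ker (φ : B →ₗ[ℂ] ℂ))
    {g : Dual' (Bidual (Tri A X B))}
    (hg : ∀ W R : Bidual (Tri A X B),
      g (W * R) = R (triCharacter (A := A) (X := X) φ) * g W)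
    (u : B) (hu : φ u = 0) : g (emb (iB (A := A) (X := X) u)) = 0 := by
  set G : B →L[ℂ] ℂ := (g.comp emb).comp (iB (A := A) (X := X)) with hG
  have hspan : Submodule.span ℂ {y : B | ∃ b k : B, φ k = 0 ∧ y = b * k}
      ≤ LinearMap.ker (G : B →ₗ[ℂ] ℂ) := by
    rw [Submodule.span_le]
    rintro y ⟨b, k, hk, rfl⟩
    have e1 : iB (A := A) (X := X) (b * k) = iB b * iB k := by
      ext <;> simp
    have : G (b * k) = 0 := by
      show g (emb (iB (A := A) (X := X) (b * k))) = 0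
      rw [e1, ← emb_mul, hg]
      simp [hk]
    simpa [LinearMap.mem_ker] using this
  have hclosed : IsClosed ((LinearMap.ker (G : B →ₗ[ℂ] ℂ) : Submodule ℂ B) : Set B) :=
    ContinuousLinearMap.isClosed_ker G
  have hc := Submodule.topologicalClosure_minimal _ hspan hclosed
  rw [hker] at hc
  have := hc (by simpa [LinearMap.mem_ker] using hu)
  simpa [LinearMap.mem_ker, hG] using this

/-- `PhiForm` bundled as a continuous linear map in `f`. -/
noncomputable def PhiFormL (φ : B →L[ℂ] ℂ) :
    Dual' (Tri A X B) →L[ℂ] BilForm (Bidual (Tri A X B)) :=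
  LinearMap.mkContinuous
    { toFun := fun f => PhiForm φ f
      map_add' := fun f f' => by
        ext F G; simp [PhiForm_apply]; ring
      map_smul' := fun c f => by
        ext F G; simp [PhiForm_apply]; ring }
    ‖Psi (A := A) (X := X) φ‖
    (fun f => by
      show ‖PhiForm φ f‖ ≤ _
      rw [PhiForm, ContinuousLinearMap.norm_smulRight_apply]
      have h1 : ‖ContinuousLinearMap.apply ℂ ℂ f‖ ≤ ‖f‖ := by
        refine ContinuousLinearMap.opNorm_le_bound _ (norm_nonneg f) fun F => ?_
        calc ‖ContinuousLinearMap.apply ℂ ℂ f F‖ = ‖F f‖ := rfl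
          _ ≤ ‖F‖ * ‖f‖ := F.le_opNorm f
          _ = ‖f‖ * ‖F‖ := mul_comm _ _
      have h0 : (0:ℝ) ≤ ‖Psi (A := A) (X := X) φ‖ := norm_nonneg _
      calc ‖ContinuousLinearMap.apply ℂ ℂ f‖ * ‖Psi (A := A) (X := X) φ‖
          ≤ ‖f‖ * ‖Psi (A := A) (X := X) φ‖ := by nlinarith
        _ = ‖Psi (A := A) (X := X) φ‖ * ‖f‖ := mul_comm _ _)

@[simp] lemma PhiFormL_apply (φ : B →L[ℂ] ℂ) (f : Dual' (Tri A X B)) :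
    PhiFormL (A := A) (X := X) φ f = PhiForm φ f := rfl

lemma PhiForm_triChar (φ : B →L[ℂ] ℂ) (hmul : ∀ b b', φ (b * b') = φ b * φ b') :
    PhiForm φ (triCharacter (A := A) (X := X) φ) = piStar (Psi (A := A) (X := X) φ) := by
  ext F G
  simp only [PhiForm_apply, piStar_apply]
  show F (triCharacter φ) * G (triCharacter φ) = (F * G) (triCharacter φ)
  rw [mul_psi φ hmul]
  ring

end AuxStatement12

/-- Let `T = Tri(A,X,B)` be a triangular Banach algebra with
`closure(A²) = A` and `closure(A·X) = X`, and let `φ ∈ Δ(B)` satisfy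
`closure(B · ker φ) = ker φ`.  If either (i) `B` is not left `φ`-amenable, or (ii) `X` admits
a right `φ`-character, then `T**` (with the first Arens product) is not approximately biflat. -/
theorem statement12 (A B X : Type*)
    [NonUnitalNormedRing A] [NormedSpace ℂ A] [IsScalarTower ℂ A A] [SMulCommClass ℂ A A]
    [CompleteSpace A]
    [NonUnitalNormedRing B] [NormedSpace ℂ B] [IsScalarTower ℂ B B] [SMulCommClass ℂ B B]
    [CompleteSpace B]
    [NormedAddCommGroup X] [NormedSpace ℂ X] [CompleteSpace X]
    [BanachBimodule A B X]
    (hA2 : (Submodule.span ℂ {y : A | ∃ a a' : A, y = a * a'}).topologicalClosure = ⊤)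
    (hAX : (Submodule.span ℂ {y : X | ∃ (a : A) (x : X), y = lAct A B X a x}).topologicalClosure
      = ⊤)
    (φ : B →L[ℂ] ℂ) (hφ : IsCharacter φ)
    (hker : (Submodule.span ℂ {y : B | ∃ b k : B, φ k = 0 ∧ y = b * k}).topologicalClosure =
      LinearMap.ker (φ : B →ₗ[ℂ] ℂ))
    (hcases : ¬ LeftPhiAmenable φ ∨
      ∃ η : X →L[ℂ] ℂ, η ≠ 0 ∧ ∀ (b : B) (x : X), η (rAct A B X b x) = φ b * η x) :
    ¬ ApproximatelyBiflat (Bidual (Tri A X B)) := by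
  rintro ⟨l, hne, hbm, hconv⟩
  haveI := hne
  have hmul := hφ.2
  -- find b0 with φ b0 = 1
  obtain ⟨b1, hb1⟩ : ∃ b, φ b ≠ 0 := by
    by_contra h
    push_neg at h
    exact hφ.1 (by ext b; simpa using h b)
  set b0 : B := (φ b1)⁻¹ • b1 with hb0
  have hφb0 : φ b0 = 1 := by
    rw [hb0, map_smul, smul_eq_mul, inv_mul_cancel₀ hb1]
  -- the convergence fact at Ψ and κ(iB b0)
  have hψemb : Psi (A := A) (X := X) φ (emb (iB b0)) = 1 := by
    simp [hφb0]
  have htends := hconv (Psi (A := A) (X := X) φ) (emb (iB b0))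
  rw [hψemb] at htends
  rcases hcases with hLPA | ⟨η, hη0, hηmod⟩
  · -- Case (i): build a left φ-amenability element, contradiction.
    apply hLPA
    obtain ⟨ρ, hρ, hc⟩ :
        ∃ ρ, IsBimodMorphism ρ ∧
          ρ (piStar (Psi (A := A) (X := X) φ)) (emb (iB b0)) ≠ 0 :=
      (hbm.and (htends.eventually_ne one_ne_zero)).exists
    set c : ℂ := ρ (piStar (Psi (A := A) (X := X) φ)) (emb (iB b0)) with hcdef
    -- the restriction map E : B* → T*
    set E : Dual' B →L[ℂ] Dual' (Tri A X B) :=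
      (ContinuousLinearMap.compL ℂ (Tri A X B) B ℂ).flip Tri.projB with hEdef
    have hE : ∀ (h : Dual' B) (t : Tri A X B), E h t = h t.b := fun _ _ => rfl
    set m0 : Bidual B :=
      ((ContinuousLinearMap.apply ℂ ℂ (emb (iB b0))).comp ρ).comp
        ((PhiFormL (A := A) (X := X) φ).comp E) with hm0def
    have hm0 : ∀ h : Dual' B, m0 h = ρ (PhiForm φ (E h)) (emb (iB b0)) := fun _ => rfl
    refine ⟨c⁻¹ • m0, fun b => ?_, ?_⟩
    · -- invariance: (c⁻¹ • m0) ∘ dualRight b = φ b • (c⁻¹ • m0)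
      ext h
      have h1 : E (dualRight b h) = piStar (E h) (iB b) := by
        ext t
        show h (b * t.b) = E h (iB b * t)
        rw [hE]
        simp
      have h2 : m0 (dualRight b h) = ρ (PhiForm φ (E h)) (emb (iB b) * emb (iB b0)) := by
        rw [hm0, h1, rightmove φ (E h) (iB b) hρ]
      have h3 : emb (iB (A := A) (X := X) b) * emb (iB b0) = emb (iB (b * b0)) := by
        rw [emb_mul]
        congr 1
        ext <;> simp
      set g : Dual' (Bidual (Tri A X B)) := ρ (PhiForm φ (E h)) with hgdef
      have hgeig : ∀ W R : Bidual (Tri A X B),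
          g (W * R) = R (triCharacter (A := A) (X := X) φ) * g W :=
        fun W R => eigen φ hmul (E h) hρ W R
      have hu : φ (b * b0 - φ b • b0) = 0 := by
        rw [map_sub, map_smul, hmul b b0, hφb0, smul_eq_mul]
        ring
      have hv := vanishKer (A := A) (X := X) φ hker hgeig (b * b0 - φ b • b0) hu
      have hlin : g (emb (iB (A := A) (X := X) (b * b0 - φ b • b0)))
          = g (emb (iB (b * b0))) - φ b * g (emb (iB b0)) := by
        simp [map_sub, map_smul, smul_eq_mul]
      have h4 : g (emb (iB (A := A) (X := X) (b * b0))) = φ b * g (emb (iB b0)) :=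
        sub_eq_zero.mp (hlin.symm.trans hv)
      show (c⁻¹ • m0) (dualRight b h) = (φ b • (c⁻¹ • m0)) h
      rw [ContinuousLinearMap.smul_apply, ContinuousLinearMap.smul_apply,
        ContinuousLinearMap.smul_apply, h2, h3]
      rw [show ρ (PhiForm φ (E h)) (emb (iB (b * b0))) = g (emb (iB (b * b0))) from rfl, h4,
        hm0]
      rw [show ρ (PhiForm φ (E h)) (emb (iB b0)) = g (emb (iB b0)) from rfl]
      simp [smul_eq_mul]
      ring
    · -- normalization: (c⁻¹ • m0) φ = 1
      have hEφ : E φ = triCharacter (A := A) (X := X) φ := rfl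
      show (c⁻¹ • m0) φ = 1
      rw [ContinuousLinearMap.smul_apply, hm0, hEφ, PhiForm_triChar φ hmul]
      rw [smul_eq_mul, ← hcdef, inv_mul_cancel₀ hc]
  · -- Case (ii): a right φ-character on X forces the net to vanish, contradiction.
    obtain ⟨x0, hx0⟩ : ∃ x, η x ≠ 0 := by
      by_contra h
      push_neg at h
      exact hη0 (by ext x; simpa using h x)
    set ηT : Dual' (Tri A X B) := η.comp (projX (A := A) (B := B)) with hηT
    have hpiη : piStar ηT (iX x0) = η x0 • triCharacter (A := A) (X := X) φ := by
      ext t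
      show ηT (iX x0 * t) = (η x0 • triCharacter (A := A) (X := X) φ) t
      have : (iX (A := A) (B := B) x0 * t).x = rAct A B X t.b x0 := by simp
      rw [hηT]
      simp only [ContinuousLinearMap.coe_comp', Function.comp_apply, projX_apply, this,
        hηmod, ContinuousLinearMap.smul_apply, smul_eq_mul, triCharacter_apply]
      ring
    have hev : ∀ᶠ ρ in l,
        ρ (piStar (Psi (A := A) (X := X) φ)) (emb (iB b0)) = 0 := by
      filter_upwards [hbm] with ρ hρ
      have h1 := rightmove φ ηT (iX x0) hρ (emb (iB b0))
      have h2 : PhiForm φ (piStar ηT (iX x0))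
          = η x0 • PhiForm φ (triCharacter (A := A) (X := X) φ) := by
        rw [hpiη]
        ext F G
        simp only [PhiForm_apply, ContinuousLinearMap.smul_apply, smul_eq_mul, map_smul]
        ring
      have h3 : emb (iX (A := A) (B := B) x0) * emb (iB b0)
          = emb (iX (rAct A B X b0 x0)) := by
        rw [emb_mul]
        congr 1
        ext <;> simp
      have hgeig : ∀ W R : Bidual (Tri A X B),
          ρ (PhiForm φ ηT) (W * R)
            = R (triCharacter (A := A) (X := X) φ) * ρ (PhiForm φ ηT) W :=
        fun W R => eigen φ hmul ηT hρ W R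
      have h4 : ρ (PhiForm φ ηT) (emb (iX (rAct A B X b0 x0))) = 0 :=
        vanishX (A := A) φ hAX hgeig _
      rw [h2, map_smul, PhiForm_triChar φ hmul] at h1
      rw [h3, h4] at h1
      have h5 : η x0 * ρ (piStar (Psi (A := A) (X := X) φ)) (emb (iB b0)) = 0 := by
        simpa [smul_eq_mul] using h1
      rcases mul_eq_zero.mp h5 with h | h
      · exact absurd h hx0
      · exact h
    have hzero : Tendsto
        (fun ρ => ρ (piStar (Psi (A := A) (X := X) φ)) (emb (iB b0))) l (𝓝 0) := by
      refine (tendsto_congr' ?_).mpr tendsto_const_nhds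
      filter_upwards [hev] with ρ h using h
    exact one_ne_zero (tendsto_nhds_unique htends hzero)

end ApproxBiflat
end
end
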